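/- Suppose ‖∇_θ² log π(a|s;θ_1) − ∇_θ² log π(a|s;θ_2)‖ ≤ ρ‖θ_1−θ_2‖, ‖∇_θ log π(a|s;θ)‖ ≤ G, ‖∇_θ² log π(a|s;θ)‖ ≤ L, and 0 ≤ r ≤ R with 0 ≤ γ < 1. Then for any fixed trajectory τ, the map θ ↦ u(τ;θ) (defined as in the policy Hessian estimator) is Lipschitz with constant η_ρ := (2(H+1)GL + ρ)R/(1−γ)². -/

import Mathlib

open Finset in
/-- Lipschitz property of the per-trajectory Hessian estimator `u(τ;·)` with
constant `η_ρ = (2(H+1)GL + ρ)R/(1−γ)²`, where `score θ h = ∇_θ log π(a_h|s_h;θ)`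
is bounded by `G`, its derivative (the per-step Hessian) is bounded by `L` and
`ρ`-Lipschitz, and rewards lie in `[0,R]`. -/
theorem stmt_7 {d : ℕ}
    (H : ℕ) (r : ℕ → ℝ) (R γ G L ρ : ℝ)
    (score : EuclideanSpace ℝ (Fin d) → ℕ → EuclideanSpace ℝ (Fin d))
    (hr : ∀ t, 0 ≤ r t ∧ r t ≤ R)
    (hγ0 : 0 ≤ γ) (hγ1 : γ < 1)
    (hdiff : ∀ h, Differentiable ℝ (fun θ => score θ h))
    (hG : ∀ θ h, ‖score θ h‖ ≤ G)
    (hL : ∀ θ h, ‖fderiv ℝ (fun θ' => score θ' h) θ‖ ≤ L)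
    (hρ : ∀ θ θ' h, ‖fderiv ℝ (fun θ'' => score θ'' h) θ
            - fderiv ℝ (fun θ'' => score θ'' h) θ'‖ ≤ ρ * ‖θ - θ'‖) :
    ∀ θ θ' : EuclideanSpace ℝ (Fin d),
      ‖(((innerSL ℝ (∑ h ∈ range (H + 1), score θ h)).smulRight
            (∑ h ∈ range (H + 1), (∑ t ∈ Icc h H, γ ^ t * r t) • score θ h))
          + ∑ h ∈ range (H + 1),
              (∑ t ∈ Icc h H, γ ^ t * r t) • fderiv ℝ (fun θ'' => score θ'' h) θ)
        - (((innerSL ℝ (∑ h ∈ range (H + 1), score θ' h)).smulRight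
            (∑ h ∈ range (H + 1), (∑ t ∈ Icc h H, γ ^ t * r t) • score θ' h))
          + ∑ h ∈ range (H + 1),
              (∑ t ∈ Icc h H, γ ^ t * r t) • fderiv ℝ (fun θ'' => score θ'' h) θ')‖
      ≤ (2 * ((H : ℝ) + 1) * G * L + ρ) * R / (1 - γ) ^ 2 * ‖θ - θ'‖ := by
  intro θ θ'
  set c : ℕ → ℝ := fun h => ∑ t ∈ Icc h H, γ ^ t * r t with hc
  have hR : 0 ≤ R := le_trans (hr 0).1 (hr 0).2
  have hG0 : 0 ≤ G := le_trans (norm_nonneg _) (hG θ 0)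
  have hL0 : 0 ≤ L := le_trans (norm_nonneg _) (hL θ 0)
  have h1γ : 0 < 1 - γ := by linarith
  have hρd : 0 ≤ ρ * ‖θ - θ'‖ := le_trans (norm_nonneg _) (hρ θ θ' 0)
  have hc0 : ∀ h, 0 ≤ c h := fun h =>
    Finset.sum_nonneg fun t _ => mul_nonneg (pow_nonneg hγ0 t) (hr t).1
  -- geometric sum bound
  have hgeom : ∀ n : ℕ, ∑ k ∈ range n, γ ^ k ≤ 1 / (1 - γ) := by
    intro n
    rw [le_div_iff₀ h1γ]
    have h := geom_sum_mul γ n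
    nlinarith [pow_nonneg hγ0 n]
  have hch : ∀ h, c h ≤ γ ^ h * (R / (1 - γ)) := by
    intro h
    calc c h ≤ ∑ t ∈ Icc h H, γ ^ t * R :=
          Finset.sum_le_sum fun t _ =>
            mul_le_mul_of_nonneg_left (hr t).2 (pow_nonneg hγ0 t)
      _ = γ ^ h * ∑ i ∈ range (H + 1 - h), γ ^ i * R := by
          rw [← Finset.Ico_add_one_right_eq_Icc, Finset.sum_Ico_eq_sum_range, Finset.mul_sum]
          exact Finset.sum_congr rfl fun i _ => by rw [pow_add]; ring
      _ ≤ γ ^ h * (R / (1 - γ)) := by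
          refine mul_le_mul_of_nonneg_left ?_ (pow_nonneg hγ0 h)
          rw [← Finset.sum_mul]
          calc (∑ i ∈ range (H + 1 - h), γ ^ i) * R ≤ (1 / (1 - γ)) * R :=
                mul_le_mul_of_nonneg_right (hgeom _) hR
            _ = R / (1 - γ) := by ring
  have hcsum : ∑ h ∈ range (H + 1), c h ≤ R / (1 - γ) ^ 2 := by
    calc ∑ h ∈ range (H + 1), c h ≤ ∑ h ∈ range (H + 1), γ ^ h * (R / (1 - γ)) :=
          Finset.sum_le_sum fun h _ => hch h
      _ = (∑ h ∈ range (H + 1), γ ^ h) * (R / (1 - γ)) := by rw [Finset.sum_mul]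
      _ ≤ (1 / (1 - γ)) * (R / (1 - γ)) :=
          mul_le_mul_of_nonneg_right (hgeom _) (div_nonneg hR h1γ.le)
      _ = R / (1 - γ) ^ 2 := by rw [div_mul_div_comm, one_mul, sq]
  have hcsum0 : 0 ≤ ∑ h ∈ range (H + 1), c h := Finset.sum_nonneg fun h _ => hc0 h
  -- Lipschitz bound on each score
  have hLip : ∀ h, ‖score θ h - score θ' h‖ ≤ L * ‖θ - θ'‖ := fun h =>
    (convex_univ).norm_image_sub_le_of_norm_fderiv_le
      (fun z _ => (hdiff h z)) (fun z _ => hL z h) (Set.mem_univ θ') (Set.mem_univ θ)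
  set S := ∑ h ∈ range (H + 1), score θ h with hS
  set S' := ∑ h ∈ range (H + 1), score θ' h with hS'
  set V := ∑ h ∈ range (H + 1), c h • score θ h with hV
  set V' := ∑ h ∈ range (H + 1), c h • score θ' h with hV'
  set M := ∑ h ∈ range (H + 1), c h • fderiv ℝ (fun θ'' => score θ'' h) θ with hM
  set M' := ∑ h ∈ range (H + 1), c h • fderiv ℝ (fun θ'' => score θ'' h) θ' with hM'
  have key : ((innerSL ℝ S).smulRight V + M) - ((innerSL ℝ S').smulRight V' + M')
      = (innerSL ℝ S).smulRight (V - V') + (innerSL ℝ (S - S')).smulRight V'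
        + (M - M') := by
    refine ContinuousLinearMap.ext fun x => ?_
    simp only [ContinuousLinearMap.add_apply, ContinuousLinearMap.sub_apply,
      ContinuousLinearMap.smulRight_apply, innerSL_apply_apply, inner_sub_left,
      smul_sub, sub_smul]
    module
  -- norm bounds for the pieces
  have hSnorm : ‖S‖ ≤ ((H : ℝ) + 1) * G := by
    calc ‖S‖ ≤ ∑ h ∈ range (H + 1), ‖score θ h‖ := norm_sum_le _ _
      _ ≤ ∑ h ∈ range (H + 1), G := Finset.sum_le_sum fun h _ => hG θ h
      _ = ((H : ℝ) + 1) * G := by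
          rw [Finset.sum_const, Finset.card_range, nsmul_eq_mul]; push_cast; ring
  have hSdiff : ‖S - S'‖ ≤ ((H : ℝ) + 1) * (L * ‖θ - θ'‖) := by
    rw [hS, hS', ← Finset.sum_sub_distrib]
    calc ‖∑ h ∈ range (H + 1), (score θ h - score θ' h)‖
        ≤ ∑ h ∈ range (H + 1), ‖score θ h - score θ' h‖ := norm_sum_le _ _
      _ ≤ ∑ h ∈ range (H + 1), L * ‖θ - θ'‖ := Finset.sum_le_sum fun h _ => hLip h
      _ = ((H : ℝ) + 1) * (L * ‖θ - θ'‖) := by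
          rw [Finset.sum_const, Finset.card_range, nsmul_eq_mul]; push_cast; ring
  have hV'norm : ‖V'‖ ≤ (R / (1 - γ) ^ 2) * G := by
    calc ‖V'‖ ≤ ∑ h ∈ range (H + 1), ‖c h • score θ' h‖ := norm_sum_le _ _
      _ ≤ ∑ h ∈ range (H + 1), c h * G := by
          refine Finset.sum_le_sum fun h _ => ?_
          rw [norm_smul, Real.norm_eq_abs, abs_of_nonneg (hc0 h)]
          exact mul_le_mul_of_nonneg_left (hG θ' h) (hc0 h)
      _ = (∑ h ∈ range (H + 1), c h) * G := by rw [Finset.sum_mul]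
      _ ≤ (R / (1 - γ) ^ 2) * G := mul_le_mul_of_nonneg_right hcsum hG0
  have hVdiff : ‖V - V'‖ ≤ (R / (1 - γ) ^ 2) * (L * ‖θ - θ'‖) := by
    rw [hV, hV', ← Finset.sum_sub_distrib]
    have hd0 : 0 ≤ L * ‖θ - θ'‖ := mul_nonneg hL0 (norm_nonneg _)
    calc ‖∑ h ∈ range (H + 1), (c h • score θ h - c h • score θ' h)‖
        ≤ ∑ h ∈ range (H + 1), ‖c h • score θ h - c h • score θ' h‖ := norm_sum_le _ _
      _ ≤ ∑ h ∈ range (H + 1), c h * (L * ‖θ - θ'‖) := by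
          refine Finset.sum_le_sum fun h _ => ?_
          rw [← smul_sub, norm_smul, Real.norm_eq_abs, abs_of_nonneg (hc0 h)]
          exact mul_le_mul_of_nonneg_left (hLip h) (hc0 h)
      _ = (∑ h ∈ range (H + 1), c h) * (L * ‖θ - θ'‖) := by rw [Finset.sum_mul]
      _ ≤ (R / (1 - γ) ^ 2) * (L * ‖θ - θ'‖) := mul_le_mul_of_nonneg_right hcsum hd0
  have hMdiff : ‖M - M'‖ ≤ (R / (1 - γ) ^ 2) * (ρ * ‖θ - θ'‖) := by
    rw [hM, hM', ← Finset.sum_sub_distrib]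
    calc ‖∑ h ∈ range (H + 1), (c h • fderiv ℝ (fun θ'' => score θ'' h) θ
            - c h • fderiv ℝ (fun θ'' => score θ'' h) θ')‖
        ≤ ∑ h ∈ range (H + 1), ‖c h • fderiv ℝ (fun θ'' => score θ'' h) θ
            - c h • fderiv ℝ (fun θ'' => score θ'' h) θ'‖ := norm_sum_le _ _
      _ ≤ ∑ h ∈ range (H + 1), c h * (ρ * ‖θ - θ'‖) := by
          refine Finset.sum_le_sum fun h _ => ?_
          rw [show c h • fderiv ℝ (fun θ'' => score θ'' h) θ
              - c h • fderiv ℝ (fun θ'' => score θ'' h) θ'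
              = c h • (fderiv ℝ (fun θ'' => score θ'' h) θ
              - fderiv ℝ (fun θ'' => score θ'' h) θ') from (smul_sub _ _ _).symm,
            norm_smul, Real.norm_eq_abs, abs_of_nonneg (hc0 h)]
          exact mul_le_mul_of_nonneg_left (hρ θ θ' h) (hc0 h)
      _ = (∑ h ∈ range (H + 1), c h) * (ρ * ‖θ - θ'‖) := by rw [Finset.sum_mul]
      _ ≤ (R / (1 - γ) ^ 2) * (ρ * ‖θ - θ'‖) := mul_le_mul_of_nonneg_right hcsum hρd
  rw [key]
  calc ‖(innerSL ℝ S).smulRight (V - V') + (innerSL ℝ (S - S')).smulRight V' + (M - M')‖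
      ≤ ‖(innerSL ℝ S).smulRight (V - V')‖ + ‖(innerSL ℝ (S - S')).smulRight V'‖
        + ‖M - M'‖ := norm_add₃_le
    _ = ‖S‖ * ‖V - V'‖ + ‖S - S'‖ * ‖V'‖ + ‖M - M'‖ := by
        rw [ContinuousLinearMap.norm_smulRight_apply, ContinuousLinearMap.norm_smulRight_apply,
          innerSL_apply_norm, innerSL_apply_norm]
    _ ≤ (2 * ((H : ℝ) + 1) * G * L + ρ) * R / (1 - γ) ^ 2 * ‖θ - θ'‖ := by
        have hne : (1 - γ) ≠ 0 := h1γ.ne'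
        have t1 : ‖S‖ * ‖V - V'‖
            ≤ (((H : ℝ) + 1) * G) * ((R / (1 - γ) ^ 2) * (L * ‖θ - θ'‖)) :=
          mul_le_mul hSnorm hVdiff (norm_nonneg _) (by positivity)
        have t2 : ‖S - S'‖ * ‖V'‖
            ≤ (((H : ℝ) + 1) * (L * ‖θ - θ'‖)) * ((R / (1 - γ) ^ 2) * G) :=
          mul_le_mul hSdiff hV'norm (norm_nonneg _) (by positivity)
        have heq : (((H : ℝ) + 1) * G) * ((R / (1 - γ) ^ 2) * (L * ‖θ - θ'‖))
            + (((H : ℝ) + 1) * (L * ‖θ - θ'‖)) * ((R / (1 - γ) ^ 2) * G)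
            + (R / (1 - γ) ^ 2) * (ρ * ‖θ - θ'‖)
            = (2 * ((H : ℝ) + 1) * G * L + ρ) * R / (1 - γ) ^ 2 * ‖θ - θ'‖ := by
          field_simp
          ring
        linarith [hMdiff]
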